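/- Let c : X_1 × ⋯ × X_d → ℝ be continuous on a product of compact metric spaces. Suppose Γ_n ⊆ X_1 × ⋯ × X_d are sets and μ_n are probability measures with μ_n(Γ_n) = 1, each Γ_n is c_n-cyclically monotone for continuous functions c_n converging uniformly to c, and μ_n → μ weakly. Then μ is concentrated on a c-cyclically monotone set. -/

import Mathlib

open MeasureTheory Metric Filter

/-- A set `Γ ⊆ X_1 × ⋯ × X_d` is `c`-cyclically monotone if for all `N`, all points
`p 1, …, p N ∈ Γ` and all permutations `σ_2, …, σ_d` of `{1,…,N}` (the first coordinate
is not permuted), `∑ j, c (p j) ≤ ∑ j, c (p (σ_1 j) 1, …, p (σ_d j) d)`. -/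
def IsCycMono {d : ℕ} {X : Fin d → Type*} (c : (∀ i, X i) → ℝ)
    (Γ : Set (∀ i, X i)) : Prop :=
  ∀ (N : ℕ) (p : Fin N → ∀ i, X i), (∀ j, p j ∈ Γ) →
    ∀ σ : Fin d → Equiv.Perm (Fin N), (∀ h : 0 < d, σ ⟨0, h⟩ = 1) →
      ∑ j, c (p j) ≤ ∑ j, c (fun i => p (σ i j) i)

section Aux

variable {Y : Type*} [MetricSpace Y] [CompactSpace Y] [MeasurableSpace Y] [BorelSpace Y]

/-- If integrals of continuous functions converge and `y` is in the support of `μ`,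
then eventually `μs n (ball y r) > 0`. -/
lemma eventually_ball_pos (μ : Measure Y) [IsProbabilityMeasure μ]
    (μs : ℕ → Measure Y) (hprob : ∀ n, IsProbabilityMeasure (μs n))
    (hweak : ∀ g : Y → ℝ, Continuous g →
      Tendsto (fun n => ∫ x, g x ∂(μs n)) atTop (nhds (∫ x, g x ∂μ)))
    (y : Y) (hy : ∀ r > 0, 0 < μ (ball y r)) {r : ℝ} (hr : 0 < r) :
    ∀ᶠ n in atTop, 0 < μs n (ball y r) := by
  set a : ℝ := r / 2 with ha
  have ha0 : 0 < a := by positivity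
  set g : Y → ℝ := fun x => max 0 (1 - dist x y / a) with hgdef
  have hgc : Continuous g :=
    continuous_const.max (continuous_const.sub ((continuous_id.dist continuous_const).div_const a))
  have hg0 : ∀ x, 0 ≤ g x := fun x => le_max_left _ _
  have hg1 : ∀ x, g x ≤ 1 := by
    intro x
    apply max_le (by norm_num)
    have : 0 ≤ dist x y / a := by positivity
    linarith
  have hgzero : ∀ x, x ∉ ball y r → g x = 0 := by
    intro x hx
    have hd : r ≤ dist x y := by
      simpa [dist_comm, not_lt] using hx
    have : 1 ≤ dist x y / a := by
      rw [le_div_iff₀ ha0]; linarith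
    simp only [hgdef, max_eq_left_iff]
    linarith
  have hghalf : ∀ x ∈ ball y (a / 2), (1:ℝ)/2 ≤ g x := by
    intro x hx
    have hd : dist x y < a / 2 := mem_ball.mp hx
    have : dist x y / a < 1/2 := by
      rw [div_lt_iff₀ ha0]; linarith
    have : 1/2 ≤ 1 - dist x y / a := by linarith
    exact le_trans this (le_max_right _ _)
  have hgint : ∀ (ν : Measure Y) [IsFiniteMeasure ν], Integrable g ν := by
    intro ν _
    exact hgc.integrable_of_hasCompactSupport (HasCompactSupport.of_compactSpace g)
  have hpos : 0 < ∫ x, g x ∂μ := by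
    have h1 : (1/2 : ℝ) * (μ (ball y (a/2))).toReal ≤ ∫ x in ball y (a/2), g x ∂μ := by
      have := setIntegral_ge_of_const_le measurableSet_ball (measure_ne_top _ _) hghalf
        ((hgint μ).integrableOn)
      rw [smul_eq_mul, mul_comm] at this; exact this
    have h2 : ∫ x in ball y (a/2), g x ∂μ ≤ ∫ x, g x ∂μ :=
      setIntegral_le_integral (hgint μ) (Eventually.of_forall hg0)
    have h3 : 0 < (μ (ball y (a/2))).toReal :=
      ENNReal.toReal_pos (hy _ (by positivity)).ne' (measure_ne_top _ _)
    nlinarith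
  have hev : ∀ᶠ n in atTop, 0 < ∫ x, g x ∂(μs n) :=
    (hweak g hgc).eventually (eventually_gt_nhds hpos)
  filter_upwards [hev] with n hn
  by_contra h0
  push_neg at h0
  have hz : μs n (ball y r) = 0 := le_antisymm h0 zero_le
  have hle : ∀ x, g x ≤ (ball y r).indicator (fun _ => (1:ℝ)) x := by
    intro x
    by_cases hx : x ∈ ball y r
    · simp [Set.indicator_of_mem hx, hg1 x]
    · simp [Set.indicator_of_notMem hx, hgzero x hx]
  have : ∫ x, g x ∂(μs n) ≤ (μs n (ball y r)).toReal := by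
    calc ∫ x, g x ∂(μs n) ≤ ∫ x, (ball y r).indicator (fun _ => (1:ℝ)) x ∂(μs n) :=
          integral_mono (hgint _) ((integrable_const (1:ℝ)).indicator measurableSet_ball) hle
      _ = (μs n (ball y r)).toReal := by
          rw [integral_indicator_const _ measurableSet_ball]; simp; rfl
  rw [hz] at this
  simp at this
  linarith

end Aux

theorem stmt14 {d : ℕ} {X : Fin d → Type*} [∀ i, MetricSpace (X i)]
    [∀ i, CompactSpace (X i)] [∀ i, MeasurableSpace (X i)] [∀ i, BorelSpace (X i)]
    (c : (∀ i, X i) → ℝ) (hc : Continuous c)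
    (cs : ℕ → (∀ i, X i) → ℝ) (hcs : ∀ n, Continuous (cs n))
    (hunif : TendstoUniformly cs c Filter.atTop)
    (Γ : ℕ → Set (∀ i, X i)) (hΓ : ∀ n, IsCycMono (cs n) (Γ n))
    (μs : ℕ → Measure (∀ i, X i)) (hprob : ∀ n, IsProbabilityMeasure (μs n))
    (hconc : ∀ n, μs n (Γ n) = 1)
    (μ : Measure (∀ i, X i)) (hμprob : IsProbabilityMeasure μ)
    (hweak : ∀ g : (∀ i, X i) → ℝ, Continuous g →
      Filter.Tendsto (fun n => ∫ x, g x ∂(μs n)) Filter.atTop (nhds (∫ x, g x ∂μ))) :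
    ∃ Γ' : Set (∀ i, X i), IsCycMono c Γ' ∧ μ Γ' = 1 := by
  set S : Set (∀ i, X i) := {x | ∀ r > 0, 0 < μ (ball x r)} with hSdef
  refine ⟨S, ?_, ?_⟩
  · -- cyclical monotonicity of S
    intro N p hp σ hσ
    refine le_of_forall_pos_le_add ?_
    intro ε hε
    set ε' : ℝ := ε / (4 * N + 4) with hε'def
    have hε' : 0 < ε' := by positivity
    obtain ⟨δ, hδ, hδc⟩ := Metric.uniformContinuous_iff.mp
      (CompactSpace.uniformContinuous_of_continuous hc) ε' hε'
    have h1 : ∀ᶠ n in atTop, ∀ x, dist (c x) (cs n x) < ε' :=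
      Metric.tendstoUniformly_iff.mp hunif ε' hε'
    have h2 : ∀ᶠ n in atTop, ∀ j : Fin N, 0 < μs n (ball (p j) δ) := by
      rw [eventually_all]
      exact fun j => eventually_ball_pos μ μs hprob hweak (p j) (hp j) hδ
    obtain ⟨n, hn1, hn2⟩ := (h1.and h2).exists
    have hne : ∀ j : Fin N, (Γ n ∩ ball (p j) δ).Nonempty := by
      intro j
      rw [Set.nonempty_iff_ne_empty]
      intro hemp
      have hsub : Γ n ⊆ (ball (p j) δ)ᶜ := by
        intro x hx
        intro hxb
        exact Set.eq_empty_iff_forall_notMem.mp hemp x ⟨hx, hxb⟩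
      have hlt : μs n ((ball (p j) δ)ᶜ) < 1 := by
        rw [prob_compl_eq_one_sub measurableSet_ball]
        exact ENNReal.sub_lt_self ENNReal.one_ne_top one_ne_zero (hn2 j).ne'
      have := (measure_mono hsub).trans_lt hlt
      rw [hconc n] at this
      exact lt_irrefl _ this
    choose q hqΓ hqb using hne
    have hqd : ∀ j, dist (p j) (q j) < δ := by
      intro j
      have := hqb j
      rwa [mem_ball, dist_comm] at this
    have key := hΓ n N q hqΓ σ hσ
    have est1 : ∀ j : Fin N, c (p j) ≤ cs n (q j) + 2 * ε' := by
      intro j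
      have ha : dist (c (p j)) (c (q j)) < ε' := hδc (hqd j)
      have hb : dist (c (q j)) (cs n (q j)) < ε' := hn1 (q j)
      rw [Real.dist_eq] at ha hb
      have ha' := abs_lt.mp ha
      have hb' := abs_lt.mp hb
      linarith [ha'.2, hb'.2]
    have est2 : ∀ j : Fin N,
        cs n (fun i => q (σ i j) i) ≤ c (fun i => p (σ i j) i) + 2 * ε' := by
      intro j
      have hdist : dist (fun i => p (σ i j) i) (fun i => q (σ i j) i) < δ := by
        rw [dist_pi_lt_iff hδ]
        intro i
        exact lt_of_le_of_lt (dist_le_pi_dist (p (σ i j)) (q (σ i j)) i) (hqd (σ i j))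
      have ha : dist (c (fun i => p (σ i j) i)) (c (fun i => q (σ i j) i)) < ε' := hδc hdist
      have hb : dist (c (fun i => q (σ i j) i)) (cs n (fun i => q (σ i j) i)) < ε' :=
        hn1 _
      rw [Real.dist_eq] at ha hb
      have ha' := abs_lt.mp ha
      have hb' := abs_lt.mp hb
      linarith [ha'.2, hb'.2]
    have s1 : ∑ j, c (p j) ≤ (∑ j, cs n (q j)) + N * (2 * ε') := by
      calc ∑ j, c (p j) ≤ ∑ j : Fin N, (cs n (q j) + 2 * ε') :=
            Finset.sum_le_sum fun j _ => est1 j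
        _ = (∑ j, cs n (q j)) + N * (2 * ε') := by
            rw [Finset.sum_add_distrib, Finset.sum_const, Finset.card_univ, Fintype.card_fin]
            simp [nsmul_eq_mul]
    have s2 : ∑ j, cs n (fun i => q (σ i j) i) ≤
        (∑ j, c (fun i => p (σ i j) i)) + N * (2 * ε') := by
      calc ∑ j, cs n (fun i => q (σ i j) i)
          ≤ ∑ j : Fin N, (c (fun i => p (σ i j) i) + 2 * ε') :=
            Finset.sum_le_sum fun j _ => est2 j
        _ = (∑ j, c (fun i => p (σ i j) i)) + N * (2 * ε') := by
            rw [Finset.sum_add_distrib, Finset.sum_const, Finset.card_univ, Fintype.card_fin]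
            simp [nsmul_eq_mul]
    have hNε : (N : ℝ) * (2 * ε') + N * (2 * ε') ≤ ε := by
      have h4 : (0:ℝ) < 4 * (N:ℝ) + 4 := by positivity
      have heq : (N:ℝ) * (2 * ε') + (N:ℝ) * (2 * ε')
          = (4 * (N:ℝ)) * (ε / (4 * (N:ℝ) + 4)) := by
        rw [hε'def]; push_cast; ring
      rw [heq]
      calc (4 * (N:ℝ)) * (ε / (4 * (N:ℝ) + 4))
          ≤ (4 * (N:ℝ) + 4) * (ε / (4 * (N:ℝ) + 4)) :=
            mul_le_mul_of_nonneg_right (by linarith) (by positivity)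
        _ = ε := by field_simp
    linarith
  · -- μ S = 1
    have hcompl : μ Sᶜ = 0 := by
      apply measure_null_of_locally_null
      intro x hx
      simp only [hSdef, Set.mem_compl_iff, Set.mem_setOf_eq] at hx
      push_neg at hx
      obtain ⟨r, hr, hr0⟩ := hx
      have hz : μ (ball x r) = 0 := le_antisymm hr0 zero_le
      refine ⟨Sᶜ ∩ ball x r, ?_, ?_⟩
      · exact Filter.inter_mem self_mem_nhdsWithin
          (mem_nhdsWithin_of_mem_nhds (ball_mem_nhds x hr))
      · exact le_antisymm (le_trans (measure_mono Set.inter_subset_right) hz.le) zero_le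
    have h1 : (1 : ENNReal) ≤ μ S := by
      have hu := measure_union_le (μ := μ) S Sᶜ
      rwa [Set.union_compl_self, measure_univ, hcompl, add_zero] at hu
    exact le_antisymm prob_le_one h1
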